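/- Let T be a k-HST (k > 1) with leaf set L and root r, and suppose for each node x a set Z_x ⊆ L(x) is fixed. Build a graph H containing, for each internal node x with children x_1,…,x_t, all edges between Z_x and Z_{x_j} for each j, each edge {a,b} having weight d_T(a,b). Fix an attack B ⊆ L and call a leaf u safe if every ancestor x of u satisfies Z_x \ B ≠ ∅. Then for every safe leaf u, every ancestor x of u, and every v ∈ Z_x \ B, the graph H \ B contains a path from u to v of length at most (1 + 1/(k−1))·Γ_x. -/

import Mathlib

open scoped Classical

/-- A finite rooted tree, given by parent pointers: every non-root node has a
parent, and every node reaches the root by following parents. -/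
structure RTree (V : Type*) where
  root : V
  parent : V → Option V
  parent_root : parent root = none
  parent_ne_root : ∀ v, v ≠ root → (parent v).isSome
  reaches_root : ∀ v, Relation.ReflTransGen (fun a b => parent a = some b) v root

/-- The children of a node. -/
noncomputable def RTree.children {V : Type*} [Fintype V] (T : RTree V) (v : V) : Finset V :=
  Finset.univ.filter (fun u => T.parent u = some v)

/-- `T.ancestor x u` : `x` is a (weak) ancestor of `u`. -/
def RTree.ancestor {V : Type*} (T : RTree V) (x u : V) : Prop :=
  Relation.ReflTransGen (fun a b => T.parent a = some b) u x

/-- The leaves in the subtree rooted at `x`. -/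
noncomputable def RTree.leavesBelow {V : Type*} [Fintype V] (T : RTree V) (x : V) : Finset V :=
  Finset.univ.filter (fun u => T.children u = ∅ ∧ T.ancestor x u)

/-- Length of a path (list of points) with respect to distance `d`. -/
noncomputable def pathLen {X : Type*} (d : X → X → ℝ) : List X → ℝ
  | [] => 0
  | [_] => 0
  | a :: b :: l => d a b + pathLen d (b :: l)

theorem pathLen_concat' {X : Type*} (d : X → X → ℝ) :
    ∀ (l : List X) (b : X), l.getLast? = some b →
      ∀ a, pathLen d (l ++ [a]) = pathLen d l + d b a := by
  intro l
  induction l with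
  | nil => intro b h a; simp at h
  | cons c t ih =>
    intro b h a
    cases t with
    | nil =>
      simp at h
      subst h
      simp [pathLen]
    | cons c' t' =>
      have h' : (c' :: t').getLast? = some b := by simpa using h
      have := ih b h' a
      simp only [List.cons_append, pathLen, List.append_eq] at this ⊢
      rw [this]; ring
/-- In the biclique spanner of a `k`-HST (for each node `x` with child `y`, all
edges between `Z x` and `Z y`), every safe leaf `u` can reach every surviving
sampled vertex `v ∈ Z x \ B` of every ancestor `x` by a `B`-avoiding path of
length at most `(1 + 1/(k−1))·Γ x`. -/
theorem stmt_14 {V : Type*} [Fintype V] (T : RTree V) (k : ℝ) (hk : 1 < k)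
    (Γ : V → ℝ) (lca : V → V → V)
    (hleaf0 : ∀ v, Γ v = 0 ↔ T.children v = ∅)
    (hHST : ∀ u v, T.parent u = some v → k * Γ u ≤ Γ v)
    (hlca1 : ∀ u v, T.ancestor (lca u v) u)
    (hlca2 : ∀ u v, T.ancestor (lca u v) v)
    (hlca3 : ∀ u v w, T.ancestor w u → T.ancestor w v → T.ancestor w (lca u v))
    (Z : V → Finset V) (hZ : ∀ x, Z x ⊆ T.leavesBelow x)
    (H : SimpleGraph V)
    (hH : ∀ a b, H.Adj a b ↔ a ≠ b ∧ ∃ x y, T.parent y = some x ∧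
      ((a ∈ Z x ∧ b ∈ Z y) ∨ (a ∈ Z y ∧ b ∈ Z x)))
    (B : Finset V)
    (u : V) (hu_leaf : T.children u = ∅) (huB : u ∉ B)
    (hsafe : ∀ x, T.ancestor x u → (Z x \ B).Nonempty)
    (x : V) (hx : T.ancestor x u)
    (v : V) (hv : v ∈ Z x \ B) :
    ∃ l : List V, l ≠ [] ∧ l.Chain' H.Adj ∧ (∀ w ∈ l, w ∉ B) ∧
      l.head? = some u ∧ l.getLast? = some v ∧
      pathLen (fun a b => Γ (lca a b)) l ≤ (1 + 1 / (k - 1)) * Γ x := by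
  have hk0 : (0:ℝ) < k - 1 := by linarith
  have hC : (0:ℝ) ≤ 1 + 1/(k-1) := by positivity
  have hleaves : ∀ x w, w ∈ T.leavesBelow x → T.children w = ∅ ∧ T.ancestor x w := by
    intro x w hw
    simpa [RTree.leavesBelow] using hw
  have nonneg : ∀ x p, T.ancestor x p → T.children p = ∅ → 0 ≤ Γ x := by
    intro x p hxp hp
    induction hxp with
    | refl => rw [(hleaf0 p).mpr hp]
    | tail h step ih => nlinarith [hHST _ _ step]
  have mono : ∀ x w p, T.ancestor x w → T.ancestor w p → T.children p = ∅ → Γ w ≤ Γ x := by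
    intro x w p hxw hwp hp
    induction hxw with
    | refl => exact le_refl _
    | @tail b c h step ih =>
      have h0 : 0 ≤ Γ b := nonneg b p (hwp.trans h) hp
      nlinarith [hHST _ _ step]
  have key : ∀ y, T.ancestor y u → ∀ v, v ∈ Z y \ B →
      ∃ l : List V, l ≠ [] ∧ l.Chain' H.Adj ∧ (∀ w ∈ l, w ∉ B) ∧
      l.head? = some u ∧ l.getLast? = some v ∧
      pathLen (fun a b => Γ (lca a b)) l ≤ (1 + 1 / (k - 1)) * Γ y := by
    intro y hy
    induction hy with
    | refl =>
      intro v hv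
      have hv' := hleaves u v (hZ u (Finset.mem_sdiff.mp hv).1)
      have hvu : v = u := by
        cases hv'.2 with
        | refl => rfl
        | tail h stp =>
          exfalso
          rename_i b
          have hbc : b ∈ T.children u := by
            simp only [RTree.children, Finset.mem_filter, Finset.mem_univ, true_and]
            exact stp
          rw [hu_leaf] at hbc
          exact absurd hbc (Finset.notMem_empty _)
      have h0 : Γ u = 0 := (hleaf0 u).mpr hu_leaf
      refine ⟨[u], by simp, List.isChain_singleton u, by simpa using huB, rfl, by simp [hvu], ?_⟩
      simp [pathLen, h0]
    | @tail b c hb step ih =>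
      intro v hv
      obtain ⟨u', hu'⟩ := hsafe b hb
      have hu'Z : u' ∈ Z b := (Finset.mem_sdiff.mp hu').1
      have hu'B : u' ∉ B := (Finset.mem_sdiff.mp hu').2
      have hvZ : v ∈ Z c := (Finset.mem_sdiff.mp hv).1
      have hvB : v ∉ B := (Finset.mem_sdiff.mp hv).2
      obtain ⟨l, hne, hchain, hBl, hhead, hlast, hlen⟩ := ih u' hu'
      have hu'leaf := hleaves b u' (hZ b hu'Z)
      have hGb : 0 ≤ Γ b := nonneg b u hb hu_leaf
      have hkb : k * Γ b ≤ Γ c := hHST b c step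
      by_cases hvv : u' = v
      · subst hvv
        refine ⟨l, hne, hchain, hBl, hhead, hlast, ?_⟩
        have hbc : Γ b ≤ Γ c := by nlinarith
        calc pathLen (fun a b => Γ (lca a b)) l ≤ (1 + 1/(k-1)) * Γ b := hlen
          _ ≤ (1 + 1/(k-1)) * Γ c := mul_le_mul_of_nonneg_left hbc hC
      · have hadj : H.Adj u' v := (hH u' v).mpr ⟨hvv, c, b, step, Or.inr ⟨hu'Z, hvZ⟩⟩
        have hcu' : T.ancestor c u' := hu'leaf.2.tail step
        have hcv : T.ancestor c v := (hleaves c v (hZ c hvZ)).2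
        have hdl : Γ (lca u' v) ≤ Γ c :=
          mono c (lca u' v) u' (hlca3 u' v c hcu' hcv) (hlca1 u' v) hu'leaf.1
        refine ⟨l ++ [v], by simp, ?_, ?_, ?_, ?_, ?_⟩
        · refine hchain.append (List.isChain_singleton v) ?_
          intro a ha b' hb'
          simp only [List.head?_cons, Option.mem_def, Option.some.injEq] at hb'
          rw [hlast] at ha
          simp only [Option.mem_def, Option.some.injEq] at ha
          subst ha; subst hb'
          exact hadj
        · intro w hw
          rcases List.mem_append.mp hw with h | h
          · exact hBl w h
          · simp only [List.mem_singleton] at h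
            subst h; exact hvB
        · cases l with
          | nil => exact absurd rfl hne
          | cons a t => simpa using hhead
        · simp [List.getLast?_append]
        · rw [pathLen_concat' _ l u' hlast v]
          have hmul := mul_le_mul_of_nonneg_left hkb (le_of_lt (one_div_pos.mpr hk0))
          have e1 : (1 + 1/(k-1)) * Γ b = 1/(k-1) * (k * Γ b) := by
            field_simp
            ring
          have e2 : (1 + 1/(k-1)) * Γ c = 1/(k-1) * Γ c + Γ c := by
            field_simp
            ring
          linarith
  exact key x hx v hv
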